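/- Let (G, B, N, S) be a commensurable Tits system, W its Weyl group with length function ℓ. For w ∈ W with reduced decomposition w = s₁⋯s_m, let 𝒦_{s_i} be a set of representatives of B/(B ∩ s_i B s_i⁻¹) and choose lifts s̃_i of s_i in N. Then BwB is the disjoint union, over tuples (κ₁, …, κ_m) ∈ 𝒦_{s₁} × ⋯ × 𝒦_{s_m}, of the left cosets κ₁s̃₁ κ₂s̃₂ ⋯ κ_m s̃_m B. In particular |BwB/B| = q_{s₁}⋯q_{s_m}. -/

import Mathlib

open scoped Pointwise

set_option linter.unusedSectionVars false

section TitsAux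

variable {I G W : Type*} [Group G] [Group W] {M : CoxeterMatrix I}
  {cs : CoxeterSystem M W} {B : Subgroup G} {C : W → Set G}

private lemma memBgB {b b' : G} (g : G) (hb : b ∈ B) (hb' : b' ∈ B) :
    b * g * b' ∈ (B : Set G) * {g} * (B : Set G) :=
  ⟨b * g, ⟨b, hb, g, rfl, rfl⟩, b', hb', rfl⟩

private lemma cell_nonempty
    (hdouble : ∀ w : W, ∃ g : G, C w = (B : Set G) * {g} * (B : Set G)) (w : W) :
    (C w).Nonempty := by
  obtain ⟨g, hg⟩ := hdouble w
  exact ⟨g, hg ▸ (by simpa using memBgB (B := B) g B.one_mem B.one_mem)⟩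

private lemma BgB_eq {b b' : G} (g : G) (hb : b ∈ B) (hb' : b' ∈ B) :
    (B : Set G) * {b * g * b'} * (B : Set G) = (B : Set G) * {g} * (B : Set G) := by
  have h1 : ({b * g * b'} : Set G) = {b} * {g} * {b'} := by
    simp [Set.singleton_mul_singleton]
  rw [h1]
  calc (B : Set G) * ({b} * {g} * {b'}) * (B : Set G)
      = ((B : Set G) * {b}) * {g} * ({b'} * (B : Set G)) := by
        simp only [mul_assoc]
    _ = (B : Set G) * {g} * (B : Set G) := by
        rw [Subgroup.subgroup_mul_singleton hb, Subgroup.singleton_mul_subgroup hb']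

private lemma doubleCoset_eq
    (hdouble : ∀ w : W, ∃ g : G, C w = (B : Set G) * {g} * (B : Set G))
    {w : W} {g : G} (hg : g ∈ C w) :
    C w = (B : Set G) * {g} * (B : Set G) := by
  obtain ⟨g₀, hg₀⟩ := hdouble w
  rw [hg₀] at hg ⊢
  obtain ⟨x, hx, b', hb', rfl⟩ := hg
  obtain ⟨b, hb, y, hy, rfl⟩ := hx
  rw [Set.mem_singleton_iff] at hy; subst hy
  exact (BgB_eq y hb hb').symm

private lemma B_mul_cell
    (hdouble : ∀ w : W, ∃ g : G, C w = (B : Set G) * {g} * (B : Set G)) (w : W) :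
    (B : Set G) * C w = C w := by
  obtain ⟨g, hg⟩ := hdouble w
  rw [hg, ← mul_assoc, ← mul_assoc, coe_mul_coe]

private lemma cell_mul_B
    (hdouble : ∀ w : W, ∃ g : G, C w = (B : Set G) * {g} * (B : Set G)) (w : W) :
    C w * (B : Set G) = C w := by
  obtain ⟨g, hg⟩ := hdouble w
  rw [hg, mul_assoc ((B : Set G) * {g}), coe_mul_coe]

private lemma mem_cell_of_B_mul
    (hdouble : ∀ w : W, ∃ g : G, C w = (B : Set G) * {g} * (B : Set G))
    {w : W} {b x : G} (hb : b ∈ B) (hx : x ∈ C w) : b * x ∈ C w := by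
  rw [← B_mul_cell hdouble w]; exact ⟨b, hb, x, hx, rfl⟩

private lemma mem_cell_mul_B
    (hdouble : ∀ w : W, ∃ g : G, C w = (B : Set G) * {g} * (B : Set G))
    {w : W} {b x : G} (hb : b ∈ B) (hx : x ∈ C w) : x * b ∈ C w := by
  rw [← cell_mul_B hdouble w]; exact ⟨x, hx, b, hb, rfl⟩

/-- The "cell product" `C(s_{i₁}) ⋯ C(s_{i_m}) B` associated to a word. -/
private def cellProd (cs : CoxeterSystem M W) (B : Subgroup G) (C : W → Set G) :
    List I → Set G
  | [] => (B : Set G)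
  | i :: l => C (cs.simple i) * cellProd cs B C l

/-- Right-sided version of axiom T3. -/
private lemma T3R
    (hinv : ∀ w : W, C w⁻¹ = (C w)⁻¹)
    (hT3 : ∀ (i : I) (w : W), C (cs.simple i) * C w ⊆ C w ∪ C (cs.simple i * w))
    (i : I) (w : W) :
    C w * C (cs.simple i) ⊆ C w ∪ C (w * cs.simple i) := by
  intro x hx
  obtain ⟨y, hy, z, hz, rfl⟩ := hx
  have hzi : z⁻¹ ∈ C (cs.simple i) := by
    have : z⁻¹ ∈ (C (cs.simple i))⁻¹ := Set.inv_mem_inv.mpr hz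
    rwa [← hinv (cs.simple i), cs.inv_simple] at this
  have hyi : y⁻¹ ∈ C w⁻¹ := by
    rw [hinv w]; exact Set.inv_mem_inv.mpr hy
  have : (y * z)⁻¹ ∈ C w⁻¹ ∪ C (cs.simple i * w⁻¹) := by
    apply hT3 i w⁻¹
    rw [mul_inv_rev]
    exact ⟨z⁻¹, hzi, y⁻¹, hyi, rfl⟩
  rcases this with h | h
  · left
    rw [hinv w] at h
    simpa using Set.inv_mem_inv.mpr h
  · right
    have h' : ((y * z)⁻¹)⁻¹ ∈ (C (cs.simple i * w⁻¹))⁻¹ := Set.inv_mem_inv.mpr h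
    rw [← hinv (cs.simple i * w⁻¹)] at h'
    simp only [inv_inv] at h'
    rwa [mul_inv_rev, inv_inv, cs.inv_simple] at h'

/-- Products of a cell with simple cells are contained in a union over sublists. -/
private lemma cell_mul_cellProd_subset
    (hdouble : ∀ w : W, ∃ g : G, C w = (B : Set G) * {g} * (B : Set G))
    (hinv : ∀ w : W, C w⁻¹ = (C w)⁻¹)
    (hT3 : ∀ (i : I) (w : W), C (cs.simple i) * C w ⊆ C w ∪ C (cs.simple i * w)) :
    ∀ (l : List I) (u : W),
      C u * cellProd cs B C l ⊆ ⋃ l' ∈ {l' : List I | List.Sublist l' l}, C (u * cs.wordProd l') := by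
  intro l
  induction l with
  | nil =>
    intro u
    rw [cellProd, cell_mul_B hdouble]
    intro x hx
    refine Set.mem_biUnion (show ([] : List I) ∈ {l' : List I | List.Sublist l' []} from List.Sublist.refl _) ?_
    simpa [cs.wordProd_nil] using hx
  | cons i l ih =>
    intro u
    rw [cellProd, ← mul_assoc]
    intro x hx
    obtain ⟨y, hy, z, hz, rfl⟩ := hx
    have hy' : y ∈ C u ∪ C (u * cs.simple i) := T3R hinv hT3 i u hy
    rcases hy' with hy' | hy'
    · have := ih u ⟨y, hy', z, hz, rfl⟩
      obtain ⟨l', hl', hmem⟩ := Set.mem_iUnion₂.mp this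
      exact Set.mem_biUnion (show l' ∈ {l' : List I | List.Sublist l' (i :: l)} from hl'.cons i) hmem
    · have := ih (u * cs.simple i) ⟨y, hy', z, hz, rfl⟩
      obtain ⟨l', hl', hmem⟩ := Set.mem_iUnion₂.mp this
      refine Set.mem_biUnion (show i :: l' ∈ {l' : List I | List.Sublist l' (i :: l)} from hl'.cons₂ i) ?_
      rwa [cs.wordProd_cons, ← mul_assoc]

/-- Key exclusion lemma: `C(w')C(w'⁻¹)` misses `C(s)` when `ℓ(sw') > ℓ(w')`. -/
private lemma key_exclusion
    (hdouble : ∀ w : W, ∃ g : G, C w = (B : Set G) * {g} * (B : Set G))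
    (hdisj : Pairwise fun w w' : W => Disjoint (C w) (C w'))
    (hinv : ∀ w : W, C w⁻¹ = (C w)⁻¹)
    (hT3 : ∀ (i : I) (w : W), C (cs.simple i) * C w ⊆ C w ∪ C (cs.simple i * w))
    {i : I} {l : List I} (hred : cs.IsReduced (i :: l))
    (hlrev : C (cs.wordProd l.reverse) = cellProd cs B C l.reverse)
    {x : G} (hx : x ∈ C (cs.wordProd l) * (C (cs.wordProd l))⁻¹) :
    x ∉ C (cs.simple i) := by
  intro hxi
  have hsub : x ∈ ⋃ l' ∈ {l' : List I | List.Sublist l' l.reverse},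
      C (cs.wordProd l * cs.wordProd l') := by
    apply cell_mul_cellProd_subset hdouble hinv hT3 l.reverse (cs.wordProd l)
    rwa [← hlrev, cs.wordProd_reverse, hinv] 
  obtain ⟨l', hl', hmem⟩ := Set.mem_iUnion₂.mp hsub
  have hne : cs.wordProd l * cs.wordProd l' = cs.simple i := by
    by_contra hne
    exact (hdisj hne).le_bot ⟨hmem, hxi⟩ |>.elim
  -- derive a length contradiction
  have h0 : cs.wordProd l = cs.simple i * (cs.wordProd l')⁻¹ := by
    rw [← hne]; group
  have h1 : cs.simple i * cs.wordProd l = (cs.wordProd l')⁻¹ := by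
    rw [h0, ← mul_assoc, cs.simple_mul_simple_self, one_mul]
  have h2 : cs.length (cs.simple i * cs.wordProd l) = l.length + 1 := by
    rw [← cs.wordProd_cons]; exact hred
  have h3 : cs.length (cs.wordProd l')⁻¹ ≤ l.length := by
    rw [← cs.wordProd_reverse]
    calc cs.length (cs.wordProd l'.reverse) ≤ l'.reverse.length :=
          cs.length_wordProd_le _
      _ = l'.length := by simp
      _ ≤ l.reverse.length := hl'.length_le
      _ = l.length := by simp
  rw [h1] at h2
  omega

/-- The step lemma: `C(s_i) C(w') = C(s_i w')` for `i :: l` reduced. -/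
private lemma cell_step
    (hdouble : ∀ w : W, ∃ g : G, C w = (B : Set G) * {g} * (B : Set G))
    (hdisj : Pairwise fun w w' : W => Disjoint (C w) (C w'))
    (hinv : ∀ w : W, C w⁻¹ = (C w)⁻¹)
    (hT3 : ∀ (i : I) (w : W), C (cs.simple i) * C w ⊆ C w ∪ C (cs.simple i * w))
    {i : I} {l : List I} (hred : cs.IsReduced (i :: l))
    (hlrev : C (cs.wordProd l.reverse) = cellProd cs B C l.reverse) :
    C (cs.simple i) * C (cs.wordProd l) = C (cs.wordProd (i :: l)) := by
  have forward : ∀ x ∈ C (cs.simple i), ∀ y ∈ C (cs.wordProd l),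
      x * y ∈ C (cs.wordProd (i :: l)) := by
    intro x hx y hy
    have := hT3 i (cs.wordProd l) ⟨x, hx, y, hy, rfl⟩
    rcases this with h | h
    · exfalso
      have hxmem : x ∈ C (cs.wordProd l) * (C (cs.wordProd l))⁻¹ := by
        refine ⟨x * y, h, y⁻¹, Set.inv_mem_inv.mpr hy, by group⟩
      exact key_exclusion hdouble hdisj hinv hT3 hred hlrev hxmem hx
    · rwa [cs.wordProd_cons]
  apply Set.eq_of_subset_of_subset
  · intro z hz
    obtain ⟨x, hx, y, hy, rfl⟩ := hz
    exact forward x hx y hy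
  · obtain ⟨x₀, hx₀⟩ := cell_nonempty hdouble (cs.simple i)
    obtain ⟨y₀, hy₀⟩ := cell_nonempty hdouble (cs.wordProd l)
    have hmem := forward x₀ hx₀ y₀ hy₀
    rw [doubleCoset_eq hdouble hmem]
    intro z hz
    obtain ⟨u, hu, b', hb', rfl⟩ := hz
    obtain ⟨b, hb, v, hv, rfl⟩ := hu
    rcases hv with rfl
    refine ⟨b * x₀, mem_cell_of_B_mul hdouble hb hx₀,
      y₀ * b', mem_cell_mul_B hdouble hb' hy₀, by group⟩

/-- `C(π ω) = C(s₁)⋯C(s_m)B` for reduced words. -/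
private lemma cell_wordProd
    (hdouble : ∀ w : W, ∃ g : G, C w = (B : Set G) * {g} * (B : Set G))
    (hone : C 1 = (B : Set G))
    (hdisj : Pairwise fun w w' : W => Disjoint (C w) (C w'))
    (hinv : ∀ w : W, C w⁻¹ = (C w)⁻¹)
    (hT3 : ∀ (i : I) (w : W), C (cs.simple i) * C w ⊆ C w ∪ C (cs.simple i * w)) :
    ∀ (n : ℕ) (ω : List I), ω.length ≤ n → cs.IsReduced ω →
      C (cs.wordProd ω) = cellProd cs B C ω := by
  intro n
  induction n with
  | zero =>
    intro ω hlen _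
    rw [List.length_eq_zero_iff.mp (Nat.le_zero.mp hlen)]
    rw [cs.wordProd_nil, hone]; rfl
  | succ n ih =>
    intro ω hlen hred
    match ω with
    | [] => rw [cs.wordProd_nil, hone]; rfl
    | i :: l =>
      have hlen' : l.length ≤ n := by simpa using hlen
      have hredl : cs.IsReduced l := by
        have := hred.drop 1
        simpa using this
      have hredlrev : cs.IsReduced l.reverse := (cs.isReduced_reverse_iff l).mpr hredl
      have hl := ih l hlen' hredl
      have hlrev := ih l.reverse (by simpa using hlen') hredlrev
      rw [← cell_step hdouble hdisj hinv hT3 hred hlrev]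
      rw [hl]; rfl

private lemma conj_apply' (g x : G) : (MulAut.conj g).toMonoidHom x = g * x * g⁻¹ := rfl

/-- Decomposition of a single-letter cell into left cosets. -/
private lemma single_cell_decomp
    {i : I} {t0 : G} (ht0 : C (cs.simple i) = (B : Set G) * {t0} * (B : Set G))
    {K : Set G} (hKB : K ⊆ (B : Set G))
    (hKrep : ∀ b ∈ B, ∃! κ, κ ∈ K ∧
      κ⁻¹ * b ∈ B ⊓ B.map (MulAut.conj t0).toMonoidHom) :
    C (cs.simple i) = ⋃ κ ∈ K, (κ * t0) • (B : Set G) := by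
  apply Set.eq_of_subset_of_subset
  · intro x hx
    rw [ht0] at hx
    obtain ⟨u, hu, b', hb', rfl⟩ := hx
    obtain ⟨b, hb, y, hy, rfl⟩ := hu
    rw [Set.mem_singleton_iff] at hy
    obtain rfl := hy.symm
    obtain ⟨κ, ⟨hκK, hκm⟩, -⟩ := hKrep b hb
    rw [Subgroup.mem_inf] at hκm
    obtain ⟨c, hc, hconj⟩ := Subgroup.mem_map.mp hκm.2
    rw [conj_apply'] at hconj
    refine Set.mem_biUnion hκK ⟨c * b', mul_mem hc hb', ?_⟩
    have hbe : b = κ * (t0 * c * t0⁻¹) := by rw [hconj]; group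
    show (κ * t0) * (c * b') = b * t0 * b'
    rw [hbe]; group
  · intro x hx
    obtain ⟨κ, hκ, hxm⟩ := Set.mem_iUnion₂.mp hx
    obtain ⟨b, hb, rfl⟩ := hxm
    rw [ht0]
    have := memBgB (B := B) t0 (hKB hκ) hb
    simpa [smul_eq_mul, mul_assoc] using this

/-- The main decomposition, by induction on the word. -/
private lemma main_decomp
    (hdouble : ∀ w : W, ∃ g : G, C w = (B : Set G) * {g} * (B : Set G))
    (hone : C 1 = (B : Set G))
    (hdisj : Pairwise fun w w' : W => Disjoint (C w) (C w'))
    (hinv : ∀ w : W, C w⁻¹ = (C w)⁻¹)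
    (hT3 : ∀ (i : I) (w : W), C (cs.simple i) * C w ⊆ C w ∪ C (cs.simple i * w)) :
    ∀ (ω : List I), cs.IsReduced ω → ∀ (t : Fin ω.length → G),
      (∀ j : Fin ω.length,
        C (cs.simple (ω.get j)) = (B : Set G) * {t j} * (B : Set G)) →
      ∀ (𝒦 : Fin ω.length → Set G), (∀ j, 𝒦 j ⊆ (B : Set G)) →
      (∀ j, ∀ b ∈ B, ∃! κ, κ ∈ 𝒦 j ∧
        κ⁻¹ * b ∈ B ⊓ B.map (MulAut.conj (t j)).toMonoidHom) →
      (C (cs.wordProd ω) = ⋃ κ ∈ {κ : Fin ω.length → G | ∀ j, κ j ∈ 𝒦 j},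
          (List.ofFn fun j => κ j * t j).prod • (B : Set G)) ∧
      Set.InjOn
        (fun κ : Fin ω.length → G => (List.ofFn fun j => κ j * t j).prod • (B : Set G))
        {κ | ∀ j, κ j ∈ 𝒦 j} := by
  intro ω
  induction ω with
  | nil =>
    intro _ t ht 𝒦 h𝒦B h𝒦rep
    constructor
    · rw [cs.wordProd_nil, hone]
      apply Set.eq_of_subset_of_subset
      · intro x hx
        refine Set.mem_biUnion (show (fun _ => (1:G)) ∈
          {κ : Fin (List.length ([] : List I)) → G | ∀ j, κ j ∈ 𝒦 j} from
            fun j => j.elim0) ?_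
        simpa using hx
      · intro x hx
        obtain ⟨κ, hκ, hxm⟩ := Set.mem_iUnion₂.mp hx
        simpa using hxm
    · intro κ _ κ' _ _
      funext j; exact j.elim0
  | cons i l ih =>
    simp only [List.length_cons]
    intro hred t ht 𝒦 h𝒦B h𝒦rep
    have hredl : cs.IsReduced l := by simpa using hred.drop 1
    have hredlrev := (cs.isReduced_reverse_iff l).mpr hredl
    have hl : C (cs.wordProd l) = cellProd cs B C l :=
      cell_wordProd hdouble hone hdisj hinv hT3 l.length l le_rfl hredl
    have hlrev : C (cs.wordProd l.reverse) = cellProd cs B C l.reverse :=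
      cell_wordProd hdouble hone hdisj hinv hT3 l.length l.reverse (by simp) hredlrev
    have hstep := cell_step hdouble hdisj hinv hT3 hred hlrev
    obtain ⟨hcov', hinj'⟩ := ih hredl (fun j => t j.succ) (fun j => ht j.succ)
      (fun j => 𝒦 j.succ) (fun j => h𝒦B j.succ) (fun j => h𝒦rep j.succ)
    have ht0 : C (cs.simple i) = (B : Set G) * {t 0} * (B : Set G) := ht 0
    have hsingle := single_cell_decomp ht0 (h𝒦B 0) (h𝒦rep 0)
    set P : (Fin (l.length + 1) → G) → G :=
      fun κ => (List.ofFn fun j => κ j * t j).prod with hPdef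
    set Q : (Fin l.length → G) → G :=
      fun κ' => (List.ofFn fun j => κ' j * t j.succ).prod with hQdef
    have hPQ : ∀ κ : Fin (l.length + 1) → G,
        P κ = (κ 0 * t 0) * Q (fun j => κ j.succ) := by
      intro κ
      rw [hPdef, hQdef]
      simp only [List.ofFn_succ, List.prod_cons]
    have hQmem : ∀ κ' : Fin l.length → G, (∀ j, κ' j ∈ 𝒦 j.succ) →
        Q κ' ∈ C (cs.wordProd l) := by
      intro κ' hκ'
      have hsub : Q κ' • (B : Set G) ⊆ C (cs.wordProd l) := by
        rw [hcov']
        exact Set.subset_biUnion_of_mem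
          (u := fun κ'' : Fin l.length → G =>
            (List.ofFn fun j => κ'' j * t j.succ).prod • (B : Set G))
          (show κ' ∈ {κ : Fin l.length → G | ∀ j, κ j ∈ 𝒦 j.succ} from hκ')
      exact hsub ⟨1, B.one_mem, by simp⟩
    have ht0mem : t 0 ∈ C (cs.simple i) := by
      rw [ht0]; simpa using memBgB (B := B) (t 0) B.one_mem B.one_mem
    have ht0inv : (t 0)⁻¹ ∈ C (cs.simple i) := by
      have h := Set.inv_mem_inv.mpr ht0mem
      rwa [← hinv, cs.inv_simple] at h
    constructor
    · -- cover
      apply Set.eq_of_subset_of_subset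
      · intro x hx
        rw [← hstep] at hx
        obtain ⟨a, ha, y, hy, rfl⟩ := hx
        rw [hsingle] at ha
        obtain ⟨κ₀, hκ₀, ham⟩ := Set.mem_iUnion₂.mp ha
        obtain ⟨b, hb, rfl⟩ := ham
        have hby : b * y ∈ C (cs.wordProd l) := mem_cell_of_B_mul hdouble hb hy
        rw [hcov'] at hby
        obtain ⟨κ'', hκ'', hbym⟩ := Set.mem_iUnion₂.mp hby
        obtain ⟨b₃, hb₃, heq3⟩ := hbym
        have hPcons : P (Fin.cons κ₀ κ'') = (κ₀ * t 0) * Q κ'' := by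
          rw [hPQ]
          simp only [Fin.cons_zero, Fin.cons_succ]
        refine Set.mem_biUnion (show Fin.cons κ₀ κ'' ∈
            {κ : Fin (l.length + 1) → G | ∀ j, κ j ∈ 𝒦 j} from ?_) ?_
        · intro j
          refine Fin.cases ?_ ?_ j
          · simpa [Fin.cons_zero] using hκ₀
          · intro j'; simpa [Fin.cons_succ] using hκ'' j'
        · refine ⟨b₃, hb₃, ?_⟩
          show P (Fin.cons κ₀ κ'') • b₃ = (κ₀ * t 0) • b * y
          rw [hPcons]
          simp only [smul_eq_mul] at heq3 ⊢
          rw [mul_assoc, heq3]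
          group
      · intro x hx
        obtain ⟨κ, hκ, hxm⟩ := Set.mem_iUnion₂.mp hx
        obtain ⟨b, hb, rfl⟩ := hxm
        rw [← hstep]
        refine ⟨κ 0 * t 0, ?_, Q (fun j => κ j.succ) * b, ?_, ?_⟩
        · rw [ht0]
          simpa using memBgB (B := B) (t 0) (h𝒦B 0 (hκ 0)) B.one_mem
        · exact mem_cell_mul_B hdouble hb (hQmem _ (fun j => hκ j.succ))
        · show κ 0 * t 0 * (Q (fun j => κ j.succ) * b) = P κ • b
          rw [hPQ κ, smul_eq_mul]
          group
    · -- injectivity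
      intro κ hκ κ' hκ' heq
      have hQκ : Q (fun j => κ j.succ) ∈ C (cs.wordProd l) :=
        hQmem _ (fun j => hκ j.succ)
      have hQκ' : Q (fun j => κ' j.succ) ∈ C (cs.wordProd l) :=
        hQmem _ (fun j => hκ' j.succ)
      have heq' : ((κ 0 * t 0) * Q (fun j => κ j.succ)) • (B : Set G)
          = ((κ' 0 * t 0) * Q (fun j => κ' j.succ)) • (B : Set G) := by
        have h0 : P κ • (B : Set G) = P κ' • (B : Set G) := heq
        rwa [hPQ κ, hPQ κ'] at h0
      have hbB : ((κ 0 * t 0) * Q (fun j => κ j.succ))⁻¹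
          * ((κ' 0 * t 0) * Q (fun j => κ' j.succ)) ∈ B :=
        (leftCoset_eq_iff _).mp heq'
      have hz_eq : Q (fun j => κ' j.succ)
            * (((κ 0 * t 0) * Q (fun j => κ j.succ))⁻¹
              * ((κ' 0 * t 0) * Q (fun j => κ' j.succ)))⁻¹
            * (Q (fun j => κ j.succ))⁻¹
          = (t 0)⁻¹ * ((κ' 0)⁻¹ * κ 0) * t 0 := by group
      have hz1 : (t 0)⁻¹ * ((κ' 0)⁻¹ * κ 0) * t 0
          ∈ C (cs.wordProd l) * (C (cs.wordProd l))⁻¹ := by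
        rw [← hz_eq]
        exact ⟨_, mem_cell_mul_B hdouble (B.inv_mem hbB) hQκ',
          _, Set.inv_mem_inv.mpr hQκ, rfl⟩
      have hz2 : (t 0)⁻¹ * ((κ' 0)⁻¹ * κ 0) * t 0 ∈ C (cs.simple i) ∪ C 1 := by
        have hmul : (t 0)⁻¹ * ((κ' 0)⁻¹ * κ 0) * t 0
            ∈ C (cs.simple i) * C (cs.simple i) := by
          refine ⟨(t 0)⁻¹, ht0inv, ((κ' 0)⁻¹ * κ 0) * t 0, ?_, by group⟩
          rw [ht0]
          simpa using memBgB (B := B) (t 0)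
            (mul_mem (B.inv_mem (h𝒦B 0 (hκ' 0))) (h𝒦B 0 (hκ 0))) B.one_mem
        have h := hT3 i (cs.simple i) hmul
        rwa [cs.simple_mul_simple_self] at h
      have hzB : (t 0)⁻¹ * ((κ' 0)⁻¹ * κ 0) * t 0 ∈ (B : Set G) := by
        rcases hz2 with hz2 | hz2
        · exact absurd hz2 (key_exclusion hdouble hdisj hinv hT3 hred hlrev hz1)
        · rwa [hone] at hz2
      have hκ00 : κ' 0 = κ 0 := by
        obtain ⟨κu, -, huniq⟩ := h𝒦rep 0 (κ 0) (h𝒦B 0 (hκ 0))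
        have e1 : κ 0 = κu := huniq (κ 0) ⟨hκ 0, by
          rw [inv_mul_cancel]; exact Subgroup.one_mem _⟩
        have e2 : κ' 0 = κu := huniq (κ' 0) ⟨hκ' 0, by
          rw [Subgroup.mem_inf]
          refine ⟨mul_mem (B.inv_mem (h𝒦B 0 (hκ' 0))) (h𝒦B 0 (hκ 0)), ?_⟩
          refine ⟨_, hzB, ?_⟩
          rw [conj_apply']
          group⟩
        rw [e1, e2]
      have htails : (fun j : Fin l.length => κ j.succ)
          = (fun j : Fin l.length => κ' j.succ) := by
        apply hinj' (fun j => hκ j.succ) (fun j => hκ' j.succ)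
        show Q (fun j => κ j.succ) • (B : Set G) = Q (fun j => κ' j.succ) • (B : Set G)
        rw [hκ00] at heq'
        have h2 := (leftCoset_eq_iff _).mp heq'
        apply (leftCoset_eq_iff _).mpr
        have h3 : (Q (fun j => κ j.succ))⁻¹ * Q (fun j => κ' j.succ)
            = ((κ 0 * t 0) * Q (fun j => κ j.succ))⁻¹
              * ((κ 0 * t 0) * Q (fun j => κ' j.succ)) := by group
        rw [h3]; exact h2
      funext j
      refine Fin.cases ?_ ?_ j
      · exact hκ00.symm
      · intro j'; exact congrFun htails j'

end TitsAux

/-- Decomposition of a Bruhat cell in a commensurable Tits system: if `w = s₁⋯s_m` is a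
reduced word, `t i` are lifts of the simple reflections and `𝒦 i` sets of representatives of
`B/(B ∩ t_i B t_i⁻¹)`, then `BwB` is the disjoint union of the left cosets
`κ₁t₁⋯κ_mt_m B` over tuples `(κ₁, …, κ_m)`, and `|BwB/B| = q_{s₁}⋯q_{s_m}`. -/
theorem tits_system_bruhat_cell_decomposition
    {I G W : Type*} [Group G] [Group W] (M : CoxeterMatrix I)
    (cs : CoxeterSystem M W)
    (B : Subgroup G)
    (C : W → Set G)                              -- the Bruhat cell `BwB`
    (hdouble : ∀ w : W, ∃ g : G, C w = (B : Set G) * {g} * (B : Set G))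
    (hone : C 1 = (B : Set G))
    (hcover : (⋃ w : W, C w) = Set.univ)
    (hdisj : Pairwise fun w w' : W => Disjoint (C w) (C w'))
    (hinv : ∀ w : W, C w⁻¹ = (C w)⁻¹)
    (hT3 : ∀ (i : I) (w : W), C (cs.simple i) * C w ⊆ C w ∪ C (cs.simple i * w))
    (hfin : ∀ i : I, ((QuotientGroup.mk : G → G ⧸ B) '' C (cs.simple i)).Finite)
    (w : W) (ω : List I) (hred : cs.IsReduced ω) (hw : cs.wordProd ω = w)
    (t : Fin ω.length → G)                       -- lifts of the simple reflections of `ω`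
    (ht : ∀ i : Fin ω.length,
      C (cs.simple (ω.get i)) = (B : Set G) * {t i} * (B : Set G))
    (𝒦 : Fin ω.length → Set G)                   -- representatives of `B/(B ∩ t_i B t_i⁻¹)`
    (h𝒦B : ∀ i, 𝒦 i ⊆ (B : Set G))
    (h𝒦rep : ∀ i, ∀ b ∈ B, ∃! κ, κ ∈ 𝒦 i ∧
      κ⁻¹ * b ∈ B ⊓ B.map (MulAut.conj (t i)).toMonoidHom) :
    (C w = ⋃ κ ∈ {κ : Fin ω.length → G | ∀ i, κ i ∈ 𝒦 i},
        (List.ofFn fun i => κ i * t i).prod • (B : Set G)) ∧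
    Set.InjOn (fun κ : Fin ω.length → G => (List.ofFn fun i => κ i * t i).prod • (B : Set G))
      {κ | ∀ i, κ i ∈ 𝒦 i} ∧
    Nat.card ((QuotientGroup.mk : G → G ⧸ B) '' C w) =
      ∏ i : Fin ω.length,
        Nat.card ((QuotientGroup.mk : G → G ⧸ B) '' C (cs.simple (ω.get i))) := by
  subst hw
  obtain ⟨hcov, hinj⟩ := main_decomp hdouble hone hdisj hinv hT3 ω hred t ht 𝒦 h𝒦B h𝒦rep
  refine ⟨hcov, hinj, ?_⟩
  have hbij : Set.BijOn
      (fun κ : Fin ω.length → G =>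
        (QuotientGroup.mk ((List.ofFn fun j => κ j * t j).prod) : G ⧸ B))
      {κ | ∀ j, κ j ∈ 𝒦 j}
      ((QuotientGroup.mk : G → G ⧸ B) '' C (cs.wordProd ω)) := by
    refine ⟨?_, ?_, ?_⟩
    · intro κ hκ
      have hmem : (List.ofFn fun j => κ j * t j).prod ∈ C (cs.wordProd ω) := by
        rw [hcov]
        exact Set.mem_biUnion hκ ⟨1, B.one_mem, by simp⟩
      exact ⟨_, hmem, rfl⟩
    · intro κ hκ κ' hκ' h
      apply hinj hκ hκ'
      show (List.ofFn fun j => κ j * t j).prod • (B : Set G)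
          = (List.ofFn fun j => κ' j * t j).prod • (B : Set G)
      exact (leftCoset_eq_iff _).mpr (QuotientGroup.eq.mp h)
    · intro x hx
      obtain ⟨g, hg, rfl⟩ := hx
      rw [hcov] at hg
      obtain ⟨κ, hκ, hgm⟩ := Set.mem_iUnion₂.mp hg
      obtain ⟨b, hb, rfl⟩ := hgm
      refine ⟨κ, hκ, ?_⟩
      show QuotientGroup.mk _ = QuotientGroup.mk _
      rw [QuotientGroup.eq]
      simpa [smul_eq_mul, mul_assoc] using hb
  have hcard1 : Nat.card ((QuotientGroup.mk : G → G ⧸ B) '' C (cs.wordProd ω))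
      = Nat.card {κ : Fin ω.length → G | ∀ j, κ j ∈ 𝒦 j} :=
    (Nat.card_congr (Set.BijOn.equiv _ hbij)).symm
  have hcard2 : Nat.card {κ : Fin ω.length → G | ∀ j, κ j ∈ 𝒦 j}
      = ∏ j : Fin ω.length, Nat.card (𝒦 j) := by
    have e : ↥{κ : Fin ω.length → G | ∀ j, κ j ∈ 𝒦 j} ≃ ∀ j, ↥(𝒦 j) :=
      Equiv.subtypePiEquivPi
    exact (Nat.card_congr e).trans Nat.card_pi
  rw [hcard1, hcard2]
  apply Finset.prod_congr rfl
  intro j _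
  have hbj : Set.BijOn (fun κ => (QuotientGroup.mk (κ * t j) : G ⧸ B)) (𝒦 j)
      ((QuotientGroup.mk : G → G ⧸ B) '' C (cs.simple (ω.get j))) := by
    refine ⟨?_, ?_, ?_⟩
    · intro κ hκ
      refine ⟨κ * t j, ?_, rfl⟩
      rw [ht j]
      simpa using memBgB (B := B) (t j) (h𝒦B j hκ) B.one_mem
    · intro κ hκ κ' hκ' h
      have hz : (κ' * t j)⁻¹ * (κ * t j) ∈ B := QuotientGroup.eq.mp h.symm
      have hmem : (κ')⁻¹ * κ ∈ B ⊓ B.map (MulAut.conj (t j)).toMonoidHom := by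
        rw [Subgroup.mem_inf]
        refine ⟨mul_mem (B.inv_mem (h𝒦B j hκ')) (h𝒦B j hκ), ?_⟩
        refine ⟨_, hz, ?_⟩
        rw [conj_apply']
        group
      obtain ⟨κu, -, huniq⟩ := h𝒦rep j κ (h𝒦B j hκ)
      have e1 : κ = κu := huniq κ ⟨hκ, by
        rw [inv_mul_cancel]; exact Subgroup.one_mem _⟩
      have e2 : κ' = κu := huniq κ' ⟨hκ', hmem⟩
      rw [e1, e2]
    · intro x hx
      obtain ⟨g, hg, rfl⟩ := hx
      rw [ht j] at hg
      obtain ⟨u, hu, b', hb', rfl⟩ := hg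
      obtain ⟨b, hb, y, hy, rfl⟩ := hu
      rw [Set.mem_singleton_iff] at hy
      obtain rfl := hy.symm
      obtain ⟨κ, ⟨hκK, hκm⟩, -⟩ := h𝒦rep j b hb
      refine ⟨κ, hκK, ?_⟩
      rw [Subgroup.mem_inf] at hκm
      obtain ⟨c, hc, hconj⟩ := Subgroup.mem_map.mp hκm.2
      rw [conj_apply'] at hconj
      show QuotientGroup.mk (κ * t j) = QuotientGroup.mk (b * t j * b')
      rw [QuotientGroup.eq]
      have hbe : b = κ * (t j * c * (t j)⁻¹) := by rw [hconj]; group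
      rw [hbe]
      have hre : (κ * t j)⁻¹ * (κ * (t j * c * (t j)⁻¹) * t j * b') = c * b' := by
        group
      rw [hre]
      exact mul_mem hc hb'
  exact Nat.card_congr (Set.BijOn.equiv _ hbj)
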